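/- arXiv:2404.00446 — 3 statements merged into one kernel-verified Lean document; each statement's English description precedes it below -/
import Mathlib

section
/- Permutation equivalence preserves the projection onto each participant: if σ ~ σ', then for every participant r, the projection σ↾r equals σ'↾r. -/
structure Comm (P L : Type) where
  sender : P
  receiver : P
  label : L

def play {P L : Type} (α : Comm P L) : Set P := {α.sender, α.receiver}

abbrev Trace (P L : Type) := List (Comm P L)

def playT {P L : Type} : Trace P L → Set P
  | [] => ∅
  | α :: σ => play α ∪ playT σ

/-- Permutation equivalence: least equivalence relation swapping adjacent
communications with disjoint participant sets. -/
inductive PermEq {P L : Type} : Trace P L → Trace P L → Prop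
  | swap (σ σ' : Trace P L) (α α' : Comm P L) (h : play α ∩ play α' = ∅) :
      PermEq (σ ++ α :: α' :: σ') (σ ++ α' :: α :: σ')
  | refl (σ : Trace P L) : PermEq σ σ
  | symm {σ σ' : Trace P L} : PermEq σ σ' → PermEq σ' σ
  | trans {σ σ' σ'' : Trace P L} : PermEq σ σ' → PermEq σ' σ'' → PermEq σ σ''

/-- Local actions: outputs `q!λ` and inputs `p?λ`. -/
inductive LAction (P L : Type) where
  | out (q : P) (lab : L)
  | inp (p : P) (lab : L)

/-- Projection of a single communication onto a participant. -/
def projC {P L : Type} [DecidableEq P] (r : P) (α : Comm P L) : Option (LAction P L) :=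
  if r = α.sender then some (.out α.receiver α.label)
  else if r = α.receiver then some (.inp α.sender α.label)
  else none

/-- Projection of a trace onto a participant, applied pointwise. -/
def projT {P L : Type} [DecidableEq P] (r : P) (σ : Trace P L) : List (LAction P L) :=
  σ.filterMap (projC r)

/-- permutation equivalence preserves the projection onto each participant. -/
theorem permEq_proj {P L : Type} [DecidableEq P] {σ σ' : Trace P L}
    (h : PermEq σ σ') : ∀ r : P, projT r σ = projT r σ' := by
  induction h with
  | swap σ σ' α α' hd =>
    intro r
    have key : projC r α = none ∨ projC r α' = none := by
      by_contra hc
      push_neg at hc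
      obtain ⟨h1, h2⟩ := hc
      have m1 : r ∈ play α := by
        unfold projC at h1
        by_contra hm
        simp [play, Set.mem_insert_iff] at hm
        simp [hm.1, hm.2] at h1
      have m2 : r ∈ play α' := by
        unfold projC at h2
        by_contra hm
        simp [play, Set.mem_insert_iff] at hm
        simp [hm.1, hm.2] at h2
      have : r ∈ play α ∩ play α' := ⟨m1, m2⟩
      rw [hd] at this
      exact this
    simp only [projT, List.filterMap_append, List.filterMap_cons]
    rcases key with k | k <;> simp [k]
  | refl σ => intro r; rfl
  | symm _ ih => intro r; exact (ih r).symm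
  | trans _ _ ih1 ih2 => intro r; exact (ih1 r).trans (ih2 r)
end

section
/- If σ is a pointed trace and σ ~ σ', then σ' is a pointed trace and last(σ) = last(σ'); in particular the last communication of a pointed trace is invariant under permutation equivalence. -/
/-- A non-empty trace is pointed if every communication except the last shares
a participant with some later communication in the trace. -/
def IsPointed {P L : Type} (σ : Trace P L) : Prop :=
  σ ≠ [] ∧ ∀ i (hi : i + 1 < σ.length),
    ∃ j, i < j ∧ ∃ hj : j < σ.length,
      (play (σ.get ⟨i, by omega⟩) ∩ play (σ.get ⟨j, hj⟩)).Nonempty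

namespace PermAux

variable {P L : Type}

lemma get_mid (s s' : Trace P L) (a a' : Comm P L) :
    (s ++ a :: a' :: s')[s.length]'(by simp) = a := by
  rw [List.getElem_append_right (le_refl _)]
  simp

lemma get_mid1 (s s' : Trace P L) (a a' : Comm P L) :
    (s ++ a :: a' :: s')[s.length + 1]'(by simp) = a' := by
  rw [List.getElem_append_right (by omega)]
  simp

lemma get_out (s s' : Trace P L) (a a' b b' : Comm P L) (i : ℕ)
    (h : i < (s ++ a :: a' :: s').length)
    (h1 : i ≠ s.length) (h2 : i ≠ s.length + 1) :
    (s ++ a :: a' :: s')[i] = (s ++ b :: b' :: s')[i]'(by simpa using h) := by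
  rcases Nat.lt_or_ge i s.length with hlt | hge
  · rw [List.getElem_append_left hlt, List.getElem_append_left hlt]
  · rw [List.getElem_append_right hge, List.getElem_append_right hge]
    obtain ⟨k, hk⟩ : ∃ k, i - s.length = k + 2 := ⟨i - s.length - 2, by omega⟩
    simp only [hk, List.getElem_cons_succ]

lemma swap_pointed (s s' : Trace P L) (a a' : Comm P L)
    (h : play a ∩ play a' = ∅)
    (hp : IsPointed (s ++ a :: a' :: s')) :
    IsPointed (s ++ a' :: a :: s') ∧
      (s ++ a :: a' :: s').getLast? = (s ++ a' :: a :: s').getLast? := by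
  have hlen : (s ++ a :: a' :: s').length = s.length + 2 + s'.length := by
    simp; omega
  have hlen' : (s ++ a' :: a :: s').length = s.length + 2 + s'.length := by
    simp; omega
  -- s' ≠ []
  have hs' : s' ≠ [] := by
    intro he
    subst he
    obtain ⟨j, hj1, hj2, hne⟩ := hp.2 s.length (by rw [hlen]; omega)
    rw [hlen] at hj2
    simp only [List.length_nil] at hj2
    have : j = s.length + 1 := by omega
    subst this
    rw [show (⟨s.length, by omega⟩ : Fin _) = (⟨s.length, by rw [hlen]; omega⟩ : Fin _) from rfl] at hne
    simp only [List.get_eq_getElem] at hne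
    rw [get_mid, get_mid1] at hne
    rw [h] at hne
    exact Set.not_nonempty_empty hne
  have hpos : 0 < s'.length := List.length_pos_iff.mpr hs'
  obtain ⟨x, hx⟩ := Option.isSome_iff_exists.mp (List.getLast?_isSome.mpr hs')
  constructor
  · constructor
    · simp
    · intro i hi
      rw [hlen'] at hi
      rcases Nat.lt_trichotomy i s.length with hcase | hcase | hcase
      · -- i < s.length : use pointedness of original at i
        obtain ⟨j, hj1, hj2, hne⟩ := hp.2 i (by omega)
        rw [hlen] at hj2
        simp only [List.get_eq_getElem] at hne ⊢
        rw [get_out s s' a a' a' a i (by omega) (by omega) (by omega)] at hne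
        rcases Nat.lt_trichotomy j s.length with hj | hj | hj
        · exact ⟨j, hj1, by rw [hlen']; omega, by
            rw [get_out s s' a a' a' a j (by omega) (by omega) (by omega)] at hne
            exact hne⟩
        · -- j = s.length : original element a = new element at s.length+1
          subst hj
          refine ⟨s.length + 1, by omega, by rw [hlen']; omega, ?_⟩
          rw [get_mid] at hne
          rw [get_mid1]
          exact hne
        · rcases Nat.lt_or_ge j (s.length+1) with h2 | h2
          · omega
          rcases Nat.eq_or_lt_of_le h2 with h3 | h3
          · -- j = s.length+1 : element a', now at s.length
            have h4 : j = s.length + 1 := by omega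
            subst h4
            refine ⟨s.length, by omega, by rw [hlen']; omega, ?_⟩
            rw [get_mid1] at hne
            rw [get_mid]
            exact hne
          · refine ⟨j, hj1, by rw [hlen']; omega, ?_⟩
            rw [get_out s s' a a' a' a j (by omega) (by omega) (by omega)] at hne
            exact hne
      · -- i = s.length : new element is a' = old element at s.length+1
        subst hcase
        obtain ⟨j, hj1, hj2, hne⟩ := hp.2 (s.length + 1) (by rw [hlen]; omega)
        rw [hlen] at hj2
        refine ⟨j, by omega, by rw [hlen']; omega, ?_⟩
        simp only [List.get_eq_getElem] at hne ⊢
        rw [get_mid1] at hne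
        rw [get_mid]
        rw [get_out s s' a a' a' a j (by omega) (by omega) (by omega)] at hne
        exact hne
      · rcases Nat.eq_or_lt_of_le hcase with h3 | h3
        · -- i = s.length + 1 : new element is a = old element at s.length
          have h4 : i = s.length + 1 := by omega
          subst h4
          obtain ⟨j, hj1, hj2, hne⟩ := hp.2 s.length (by rw [hlen]; omega)
          rw [hlen] at hj2
          simp only [List.get_eq_getElem] at hne ⊢
          rw [get_mid] at hne
          have hjn1 : j ≠ s.length + 1 := by
            intro he
            subst he
            rw [get_mid1, h] at hne
            exact Set.not_nonempty_empty hne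
          refine ⟨j, by omega, by rw [hlen']; omega, ?_⟩
          rw [get_mid1]
          rw [get_out s s' a a' a' a j (by omega) (by omega) hjn1] at hne
          exact hne
        · -- i > s.length + 1
          obtain ⟨j, hj1, hj2, hne⟩ := hp.2 i (by rw [hlen]; omega)
          rw [hlen] at hj2
          refine ⟨j, hj1, by rw [hlen']; omega, ?_⟩
          simp only [List.get_eq_getElem] at hne ⊢
          rw [get_out s s' a a' a' a i (by omega) (by omega) (by omega),
            get_out s s' a a' a' a j (by omega) (by omega) (by omega)] at hne
          exact hne
  · have h1 : (s ++ a :: a' :: s') = (s ++ [a, a']) ++ s' := by simp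
    have h2 : (s ++ a' :: a :: s') = (s ++ [a', a]) ++ s' := by simp
    have hb : ∀ b : Comm P L, (b :: s').getLast? = some x := fun b => by
      rw [show b :: s' = [b] ++ s' from rfl, List.getLast?_append, hx]; rfl
    rw [h1, h2]
    simp only [List.getLast?_append, hx]
    rfl

lemma key {τ τ' : Trace P L} (hpe : PermEq τ τ') :
    (IsPointed τ → IsPointed τ' ∧ τ.getLast? = τ'.getLast?) ∧
    (IsPointed τ' → IsPointed τ ∧ τ'.getLast? = τ.getLast?) := by
  induction hpe with
  | swap s s' a a' hd =>
      refine ⟨fun hp => swap_pointed s s' a a' hd hp, fun hp => ?_⟩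
      have hd' : play a' ∩ play a = ∅ := by rw [Set.inter_comm]; exact hd
      exact swap_pointed s s' a' a hd' hp
  | refl σ => exact ⟨fun hp => ⟨hp, rfl⟩, fun hp => ⟨hp, rfl⟩⟩
  | symm _ ih => exact ⟨ih.2, ih.1⟩
  | trans _ _ ih1 ih2 =>
      refine ⟨fun hp => ?_, fun hp => ?_⟩
      · obtain ⟨p1, e1⟩ := ih1.1 hp
        obtain ⟨p2, e2⟩ := ih2.1 p1
        exact ⟨p2, e1.trans e2⟩
      · obtain ⟨p1, e1⟩ := ih2.2 hp
        obtain ⟨p2, e2⟩ := ih1.2 p1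
        exact ⟨p2, e1.trans e2⟩

end PermAux

/-- pointedness and the last communication are invariant under
permutation equivalence. -/
theorem permEq_pointed_last {P L : Type} {σ σ' : Trace P L}
    (hp : IsPointed σ) (h : PermEq σ σ') :
    IsPointed σ' ∧ σ.getLast? = σ'.getLast? := (PermAux.key h).1 hp
end

section
/- If play(α₁) = play(α₂) and ev(σ·α₁) = [σ'·α₁], then ev(σ·α₂) = [σ'·α₂]. -/
instance permSetoid (P L : Type) : Setoid (Trace P L) :=
  ⟨PermEq, ⟨PermEq.refl, PermEq.symm, PermEq.trans⟩⟩

/-- G-events live in the quotient of traces by permutation equivalence. -/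
abbrev GEvent (P L : Type) := Quotient (permSetoid P L)

/-- A g-event proper is the class of a pointed trace. -/
def IsGEvent {P L : Type} (γ : GEvent P L) : Prop :=
  ∃ σ : Trace P L, IsPointed σ ∧ γ = ⟦σ⟧

open Classical in
/-- Causal prefixing on traces: prepend `α` iff its participants meet those of `σ`. -/
noncomputable def cpre {P L : Type} (α : Comm P L) (σ : Trace P L) : Trace P L :=
  if (play α ∩ playT σ).Nonempty then α :: σ else σ

/-- `evFull σ` is (a canonical representative of) the g-event generated by `σ`. -/
noncomputable def evFull {P L : Type} : Trace P L → Trace P L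
  | [] => []
  | [α] => [α]
  | α :: β :: σ => cpre α (evFull (β :: σ))

lemma playT_append {P L : Type} (σ τ : Trace P L) :
    playT (σ ++ τ) = playT σ ∪ playT τ := by
  induction σ with
  | nil => simp [playT]
  | cons α σ ih => simp [playT, ih, Set.union_assoc]

lemma PermEq.playT_eq {P L : Type} {σ σ' : Trace P L} (h : PermEq σ σ') :
    playT σ = playT σ' := by
  induction h with
  | swap σ σ' α α' h =>
      simp [playT_append, playT, Set.union_left_comm, Set.union_comm, Set.union_assoc]
  | refl => rfl
  | symm _ ih => exact ih.symm
  | trans _ _ ih1 ih2 => exact ih1.trans ih2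

lemma PermEq.cons {P L : Type} {σ σ' : Trace P L} (α : Comm P L) (h : PermEq σ σ') :
    PermEq (α :: σ) (α :: σ') := by
  induction h with
  | swap τ τ' β β' hd => exact PermEq.swap (α :: τ) τ' β β' hd
  | refl => exact PermEq.refl _
  | symm _ ih => exact ih.symm
  | trans _ _ ih1 ih2 => exact ih1.trans ih2

/-- Causal prefixing of a g-event by a communication. -/
noncomputable def cprefix {P L : Type} (α : Comm P L) : GEvent P L → GEvent P L :=
  Quotient.map (cpre α) (by
    intro σ σ' h
    by_cases hc : (play α ∩ playT σ').Nonempty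
    · simpa [cpre, h.playT_eq, hc] using (show (α :: σ) ≈ (α :: σ') from PermEq.cons α h)
    · simpa [cpre, h.playT_eq, hc] using h)

/-- Causal prefixing of a g-event by a trace. -/
noncomputable def cprefixT {P L : Type} : Trace P L → GEvent P L → GEvent P L
  | [], γ => γ
  | α :: σ, γ => cprefix α (cprefixT σ γ)

/-- Causality on g-events. -/
def GCause {P L : Type} (γ γ' : GEvent P L) : Prop :=
  ∃ σ σ' : Trace P L, γ = ⟦σ⟧ ∧ γ' = ⟦σ ++ σ'⟧

/-- Conflict on g-events. -/
def GConflict {P L : Type} (γ γ' : GEvent P L) : Prop :=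
  ∃ (σ σ₁ σ₂ : Trace P L) (p q : P) (l₁ l₂ : L), l₁ ≠ l₂ ∧
    γ = ⟦σ ++ ⟨p, q, l₁⟩ :: σ₁⟧ ∧ γ' = ⟦σ ++ ⟨p, q, l₂⟩ :: σ₂⟧

lemma evFull_last {P L : Type} (σ : Trace P L) (α₁ α₂ : Comm P L)
    (hplay : play α₁ = play α₂) :
    ∃ f, evFull (σ ++ [α₁]) = f ++ [α₁] ∧ evFull (σ ++ [α₂]) = f ++ [α₂] := by
  induction σ with
  | nil => exact ⟨[], rfl, rfl⟩
  | cons β σ ih =>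
      obtain ⟨f, h1, h2⟩ := ih
      have hev : ∀ α (g : Trace P L), evFull (σ ++ [α]) = g ++ [α] →
          evFull (β :: σ ++ [α]) = cpre β (g ++ [α]) := by
        intro α g hg
        cases σ with
        | nil => simp [evFull, ← hg]
        | cons x xs => simp only [List.cons_append, evFull, ← hg]
      have hp : playT (f ++ [α₁]) = playT (f ++ [α₂]) := by
        simp [playT_append, playT, hplay]
      by_cases hc : (play β ∩ playT (f ++ [α₁])).Nonempty
      · refine ⟨β :: f, ?_, ?_⟩
        · rw [hev α₁ f h1]; simp [cpre, hc]
        · rw [hev α₂ f h2]; rw [hp] at hc; simp [cpre, hc]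
      · refine ⟨f, ?_, ?_⟩
        · rw [hev α₁ f h1]; simp [cpre, hc]
        · rw [hev α₂ f h2]; rw [hp] at hc; simp [cpre, hc]

lemma PermEq.append_right {P L : Type} {σ σ' : Trace P L} (τ : Trace P L)
    (h : PermEq σ σ') : PermEq (σ ++ τ) (σ' ++ τ) := by
  induction h with
  | swap ρ ρ' α α' hd =>
      simpa [List.append_assoc] using PermEq.swap ρ (ρ' ++ τ) α α' hd
  | refl => exact PermEq.refl _
  | symm _ ih => exact ih.symm
  | trans _ _ ih1 ih2 => exact ih1.trans ih2

open Classical in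
/-- Replace the first occurrence of `α₁` by `α₂`. -/
noncomputable def replaceFirst {P L : Type} (α₁ α₂ : Comm P L) : Trace P L → Trace P L
  | [] => []
  | β :: σ => if β = α₁ then α₂ :: σ else β :: replaceFirst α₁ α₂ σ

open Classical in
lemma replaceFirst_append {P L : Type} (α₁ α₂ : Comm P L) (σ τ : Trace P L) :
    replaceFirst α₁ α₂ (σ ++ τ) =
      if α₁ ∈ σ then replaceFirst α₁ α₂ σ ++ τ else σ ++ replaceFirst α₁ α₂ τ := by
  induction σ with
  | nil => simp [replaceFirst]
  | cons β σ ih =>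
      by_cases hb : β = α₁
      · simp [replaceFirst, hb]
      · by_cases hm : α₁ ∈ σ <;>
          simp [replaceFirst, hb, ih, hm, Ne.symm hb]

lemma PermEq.replaceFirst {P L : Type} {σ σ' : Trace P L} {α₁ α₂ : Comm P L}
    (hplay : play α₁ = play α₂) (h : PermEq σ σ') :
    PermEq (replaceFirst α₁ α₂ σ) (replaceFirst α₁ α₂ σ') := by
  induction h with
  | swap ρ ρ' α α' hd =>
      by_cases hm : α₁ ∈ ρ
      · rw [replaceFirst_append, replaceFirst_append, if_pos hm, if_pos hm]
        exact PermEq.swap _ ρ' α α' hd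
      · rw [replaceFirst_append, replaceFirst_append, if_neg hm, if_neg hm]
        by_cases h1 : α = α₁ <;> by_cases h2 : α' = α₁
        · subst h1; subst h2; simp [_root_.replaceFirst]; exact PermEq.refl _
        · subst h1
          simp only [_root_.replaceFirst, if_pos rfl, if_neg h2]
          have : play α₂ ∩ play α' = ∅ := by rw [← hplay]; exact hd
          exact PermEq.swap ρ ρ' α₂ α' this
        · subst h2
          simp only [_root_.replaceFirst, if_neg h1, if_pos rfl]
          have : play α ∩ play α₂ = ∅ := by rw [← hplay]; exact hd
          exact PermEq.swap ρ ρ' α α₂ this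
        · simp only [_root_.replaceFirst, if_neg h1, if_neg h2]
          exact PermEq.swap ρ _ α α' hd
  | refl => exact PermEq.refl _
  | symm _ ih => exact ih.symm
  | trans _ _ ih1 ih2 => exact ih1.trans ih2

lemma PermEq.reverse {P L : Type} {σ σ' : Trace P L} (h : PermEq σ σ') :
    PermEq σ.reverse σ'.reverse := by
  induction h with
  | swap ρ ρ' α α' hd =>
      have : play α' ∩ play α = ∅ := by
        rw [Set.inter_comm]; exact hd
      simpa [List.reverse_append] using
        PermEq.swap ρ'.reverse ρ.reverse α' α this
  | refl => exact PermEq.refl _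
  | symm _ ih => exact ih.symm
  | trans _ _ ih1 ih2 => exact ih1.trans ih2

lemma PermEq.retagLast {P L : Type} {f g : Trace P L} {α₁ α₂ : Comm P L}
    (hplay : play α₁ = play α₂) (h : PermEq (f ++ [α₁]) (g ++ [α₁])) :
    PermEq (f ++ [α₂]) (g ++ [α₂]) := by
  have hrf : ∀ l : Trace P L, _root_.replaceFirst α₁ α₂ (α₁ :: l) = α₂ :: l := by
    intro l; simp [_root_.replaceFirst]
  have := ((h.reverse.replaceFirst hplay)).reverse
  simpa [List.reverse_append, hrf] using this

/-- if play(α₁) = play(α₂) and ev(σ·α₁) = [σ'·α₁],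
then ev(σ·α₂) = [σ'·α₂]. -/
theorem sibling_events {P L : Type} (σ σ' : Trace P L) (α₁ α₂ : Comm P L)
    (hplay : play α₁ = play α₂)
    (h : (⟦evFull (σ ++ [α₁])⟧ : GEvent P L) = ⟦σ' ++ [α₁]⟧) :
    (⟦evFull (σ ++ [α₂])⟧ : GEvent P L) = ⟦σ' ++ [α₂]⟧ := by
  obtain ⟨f, h1, h2⟩ := evFull_last σ α₁ α₂ hplay
  rw [h1] at h
  have hpe : PermEq (f ++ [α₁]) (σ' ++ [α₁]) := Quotient.exact h
  rw [h2]
  exact Quotient.sound (hpe.retagLast hplay)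
end
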